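/- For every k ≥ 1/4 and every t ∈ (0, ∞) with t ≠ 1, one has √((k·(log t)² + 1)² − (log t)²) − (k·(log t)² + 1) + ((t+1)/(t−1))·log t ≥ 0. -/

import Mathlib

open Real

lemma sinh_le_mul_cosh {x : ℝ} (hx : 0 ≤ x) : Real.sinh x ≤ x * Real.cosh x := by
  have hd : ∀ y : ℝ, HasDerivAt (fun y => y * Real.cosh y - Real.sinh y)
      (y * Real.sinh y) y := by
    intro y
    have h := ((hasDerivAt_id y).mul (Real.hasDerivAt_cosh y)).sub (Real.hasDerivAt_sinh y)
    refine h.congr_deriv ?_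
    simp
  have mono : MonotoneOn (fun y => y * Real.cosh y - Real.sinh y) (Set.Ici (0:ℝ)) := by
    apply monotoneOn_of_deriv_nonneg (convex_Ici 0)
    · exact (Continuous.sub (continuous_id.mul Real.continuous_cosh)
        Real.continuous_sinh).continuousOn
    · intro y hy
      rw [interior_Ici] at hy
      exact ((hd y).differentiableAt).differentiableWithinAt
    · intro y hy
      rw [interior_Ici] at hy
      rw [(hd y).deriv]
      exact mul_nonneg (le_of_lt hy) (Real.sinh_nonneg_iff.2 (le_of_lt hy))
  have := mono (Set.self_mem_Ici) (Set.mem_Ici.2 hx) hx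
  simpa using this

lemma two_le_B (t : ℝ) (ht : 0 < t) (ht1 : t ≠ 1) :
    2 ≤ (t + 1) / (t - 1) * Real.log t := by
  set L := Real.log t with hLdef
  have hs : 0 < Real.exp (L / 2) := Real.exp_pos _
  have hs2 : Real.exp (L / 2) ^ 2 = t := by
    rw [sq, ← Real.exp_add, add_halves, Real.exp_log ht]
  rcases lt_or_gt_of_ne ht1 with h1 | h1
  · -- t < 1, L < 0
    have hL : L < 0 := Real.log_neg ht h1
    have h := sinh_le_mul_cosh (x := -(L/2)) (by linarith)
    rw [Real.sinh_eq, Real.cosh_eq] at h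
    rw [Real.exp_neg, neg_neg] at h
    have hkey : (t + 1) * L ≤ 2 * (t - 1) := by
      have hmul := mul_le_mul_of_nonneg_left h (le_of_lt hs)
      have hinv : Real.exp (L/2) * (Real.exp (L/2))⁻¹ = 1 := mul_inv_cancel₀ (ne_of_gt hs)
      nlinarith [hs, hs2, hmul, hinv]
    have ht1' : t - 1 < 0 := by linarith
    rw [div_mul_eq_mul_div, le_div_iff_of_neg ht1']
    linarith
  · -- t > 1, L > 0
    have hL : 0 < L := Real.log_pos h1
    have h := sinh_le_mul_cosh (x := L/2) (by linarith)
    rw [Real.sinh_eq, Real.cosh_eq, Real.exp_neg] at h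
    have hkey : 2 * (t - 1) ≤ (t + 1) * L := by
      have hmul := mul_le_mul_of_nonneg_left h (le_of_lt hs)
      have hinv : Real.exp (L/2) * (Real.exp (L/2))⁻¹ = 1 := mul_inv_cancel₀ (ne_of_gt hs)
      nlinarith [hs, hs2, hmul, hinv]
    have ht1' : 0 < t - 1 := by linarith
    rw [div_mul_eq_mul_div, le_div_iff₀ ht1']
    linarith

/-- The inequality `r̃(t) ≥ 0` from the Knowles–Sternberg rank-one convexity criterion:
for `k ≥ 1/4` and `t > 0`, `t ≠ 1`,
`√((k·(log t)² + 1)² − (log t)²) − (k·(log t)² + 1) + ((t+1)/(t−1))·log t ≥ 0`. -/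
theorem rtilde_nonneg (k : ℝ) (hk : 1 / 4 ≤ k) (t : ℝ) (ht : 0 < t) (ht1 : t ≠ 1) :
    0 ≤ Real.sqrt ((k * Real.log t ^ 2 + 1) ^ 2 - Real.log t ^ 2)
        - (k * Real.log t ^ 2 + 1) + (t + 1) / (t - 1) * Real.log t := by
  set L := Real.log t with hLdef
  set A := k * L ^ 2 + 1 with hAdef
  have hL2 : 0 ≤ L ^ 2 := sq_nonneg L
  have hA : L ^ 2 / 4 + 1 ≤ A := by nlinarith
  have hsqrt : A - 2 ≤ Real.sqrt (A ^ 2 - L ^ 2) := by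
    rcases le_or_gt A 2 with h | h
    · linarith [Real.sqrt_nonneg (A ^ 2 - L ^ 2)]
    · have h2 : (A - 2) ^ 2 ≤ A ^ 2 - L ^ 2 := by nlinarith
      calc A - 2 = Real.sqrt ((A - 2) ^ 2) := (Real.sqrt_sq (by linarith)).symm
        _ ≤ _ := Real.sqrt_le_sqrt h2
  have hB := two_le_B t ht ht1
  linarith
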